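/- Let m ≥ 1 and let Θ be an m×m real matrix such that the kernel of the linear map x ↦ (I−Θ)x on ℝ^m has dimension 1. Let v, κ ∈ ℝ^m be nonzero vectors with (I−Θ)ᵀv = 0 and (I−Θ)κ = 0. Let 𝒯̊ ∈ ℝ^m have strictly positive entries with ⟨v, 𝒯̊⟩ ≠ 0, let 𝒱̊ ∈ ℝ^m, let w ∈ ℝ^m have nonnegative entries summing to 1 with ⟨w, κ⟩ ≠ 0, let L ∈ ℝ, let u, d ∈ ℝ with d < 0 < u, and for p ∈ (0,1) set x(p) := log(−(p·u)/((1−p)·d)). Then there exists exactly one pair (p*, Δ*) ∈ (0,1) × ℝ^m satisfying both (I−Θ)Δ* = x(p*)·𝒯̊ + 𝒱̊ and ⟨w, Δ*⟩ = (u−d)·L, and moreover p* = (−d)/( u·exp( ⟨v,𝒱̊⟩/⟨v,𝒯̊⟩ ) − d ). -/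

import Mathlib

open Matrix

/-- per-node MC-MFE when `dim Ker(I−Θ) = 1`.  Under the Fredholm
non-degeneracy conditions `⟨v,𝒯̊⟩ ≠ 0` and `⟨w,κ⟩ ≠ 0`, there is exactly one pair
`(p*, Δ*) ∈ (0,1) × ℝ^m` satisfying the consistency equation `(I−Θ)Δ* = x(p*)𝒯̊ + 𝒱̊`
and the market clearing `⟨w,Δ*⟩ = (u−d)L`, and `p*` has the stated form. -/
theorem stmt_10 (m : ℕ) (hm : 1 ≤ m) (Θ : Matrix (Fin m) (Fin m) ℝ)
    (hker : Module.finrank ℝ (LinearMap.ker (1 - Θ).mulVecLin) = 1)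
    (v κ : Fin m → ℝ) (hv : v ≠ 0) (hκ : κ ≠ 0)
    (hvA : (1 - Θ)ᵀ *ᵥ v = 0) (hκA : (1 - Θ) *ᵥ κ = 0)
    (Tcirc : Fin m → ℝ) (hT : ∀ p, 0 < Tcirc p) (hvT : v ⬝ᵥ Tcirc ≠ 0)
    (Vcirc : Fin m → ℝ)
    (w : Fin m → ℝ) (hw : ∀ p, 0 ≤ w p) (hw1 : ∑ p, w p = 1) (hwκ : w ⬝ᵥ κ ≠ 0)
    (L u d : ℝ) (hd : d < 0) (hu : 0 < u) :
    let x : ℝ → ℝ := fun p => Real.log (-(p * u) / ((1 - p) * d))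
    let pstar : ℝ := (-d) / (u * Real.exp ((v ⬝ᵥ Vcirc) / (v ⬝ᵥ Tcirc)) - d)
    (∃! q : ℝ × (Fin m → ℝ), q.1 ∈ Set.Ioo (0 : ℝ) 1 ∧
      (1 - Θ) *ᵥ q.2 = x q.1 • Tcirc + Vcirc ∧ w ⬝ᵥ q.2 = (u - d) * L) ∧
    ∀ q : ℝ × (Fin m → ℝ), q.1 ∈ Set.Ioo (0 : ℝ) 1 →
      (1 - Θ) *ᵥ q.2 = x q.1 • Tcirc + Vcirc → w ⬝ᵥ q.2 = (u - d) * L →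
      q.1 = pstar := by
  intro x pstar
  set c : ℝ := (v ⬝ᵥ Vcirc) / (v ⬝ᵥ Tcirc) with hc
  have hpsdef : pstar = -d / (u * Real.exp c - d) := rfl
  have hxdef : ∀ p : ℝ, x p = Real.log (-(p * u) / ((1 - p) * d)) := fun p => rfl
  have hE : (0:ℝ) < Real.exp c := Real.exp_pos c
  have hD : (0:ℝ) < u * Real.exp c - d := by nlinarith
  have hDne : u * Real.exp c - d ≠ 0 := ne_of_gt hD
  -- pstar in (0,1)
  have hp0 : 0 < pstar := by rw [hpsdef]; exact div_pos (by linarith) hD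
  have hp1 : pstar < 1 := by
    rw [hpsdef]; rw [div_lt_one hD]; nlinarith
  -- x pstar = -c
  have hxps : x pstar = -c := by
    rw [hxdef]
    have harg : -(pstar * u) / ((1 - pstar) * d) = Real.exp (-c) := by
      have hdne : d ≠ 0 := ne_of_lt hd
      have hune : u ≠ 0 := ne_of_gt hu
      rw [hpsdef, Real.exp_neg]
      field_simp
      ring
    rw [harg, Real.log_exp]
  -- uniqueness of p with x p = -c
  have puniq : ∀ p : ℝ, 0 < p → p < 1 → x p = -c → p = pstar := by
    intro p h0 h1 hxp
    rw [hxdef] at hxp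
    have h2 : (1 - p) * d < 0 := mul_neg_of_pos_of_neg (by linarith) hd
    have h1' : -(p * u) < 0 := by nlinarith
    have ha : 0 < -(p * u) / ((1 - p) * d) := div_pos_of_neg_of_neg h1' h2
    have haeq : -(p * u) / ((1 - p) * d) = Real.exp (-c) := by
      rw [← hxp, Real.exp_log ha]
    have hkey : -(p * u) = Real.exp (-c) * ((1 - p) * d) :=
      (div_eq_iff (ne_of_lt h2)).mp haeq
    have hkey2 : -(p * u) * Real.exp c = (1 - p) * d := by
      rw [hkey, Real.exp_neg]
      field_simp
    have hpD : p * (u * Real.exp c - d) = -d := by linear_combination -hkey2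
    rw [hpsdef, eq_div_iff hDne]
    linear_combination hpD
  -- dot with v kills the range
  have hvdot : ∀ y : Fin m → ℝ, v ⬝ᵥ ((1 - Θ) *ᵥ y) = 0 := by
    intro y
    rw [Matrix.dotProduct_mulVec, ← Matrix.mulVec_transpose, hvA, zero_dotProduct]
  -- consistency forces x p = -c
  have hforce : ∀ (p : ℝ) (Δ : Fin m → ℝ), (1 - Θ) *ᵥ Δ = x p • Tcirc + Vcirc → x p = -c := by
    intro p Δ hΔ
    have h0 : v ⬝ᵥ ((1 - Θ) *ᵥ Δ) = 0 := hvdot Δ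
    rw [hΔ] at h0
    rw [dotProduct_add, dotProduct_smul, smul_eq_mul] at h0
    rw [hc, ← neg_div, eq_div_iff hvT]
    linarith
  -- kernel is spanned by κ
  have hκmem : κ ∈ LinearMap.ker (1 - Θ).mulVecLin := by
    rw [LinearMap.mem_ker, Matrix.mulVecLin_apply]; exact hκA
  have hκ' : (⟨κ, hκmem⟩ : LinearMap.ker (1 - Θ).mulVecLin) ≠ 0 := by
    simp only [ne_eq, Submodule.mk_eq_zero]; exact hκ
  have hker_span : ∀ y : Fin m → ℝ, (1 - Θ) *ᵥ y = 0 → ∃ t : ℝ, y = t • κ := by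
    intro y hy
    have hy' : y ∈ LinearMap.ker (1 - Θ).mulVecLin := by
      rw [LinearMap.mem_ker, Matrix.mulVecLin_apply]; exact hy
    obtain ⟨t, ht⟩ := (finrank_eq_one_iff_of_nonzero' _ hκ').mp hker ⟨y, hy'⟩
    refine ⟨t, ?_⟩
    have := congrArg (Subtype.val) ht
    simpa [eq_comm] using this
  -- the linear functional ⟨v, ·⟩
  let φ : (Fin m → ℝ) →ₗ[ℝ] ℝ :=
    { toFun := fun y => v ⬝ᵥ y
      map_add' := fun a b => dotProduct_add v a b
      map_smul' := fun t a => by simp [dotProduct_smul, smul_eq_mul] }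
  have hφsurj : Function.Surjective φ := by
    intro r
    obtain ⟨i, hi⟩ := Function.ne_iff.mp hv
    have hi' : v i ≠ 0 := by simpa using hi
    refine ⟨(r / v i) • (Pi.single i 1 : Fin m → ℝ), ?_⟩
    show v ⬝ᵥ ((r / v i) • (Pi.single i 1 : Fin m → ℝ)) = r
    rw [dotProduct_smul, dotProduct_single, smul_eq_mul, mul_one,
      div_mul_cancel₀ r hi']
  -- range (1-Θ) = ker φ
  have hfr : Module.finrank ℝ (Fin m → ℝ) = m := by
    simp [Module.finrank_fintype_fun_eq_card]
  have h1 := LinearMap.finrank_range_add_finrank_ker (1 - Θ).mulVecLin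
  have h2 := LinearMap.finrank_range_add_finrank_ker φ
  rw [hfr, hker] at h1
  rw [hfr, LinearMap.range_eq_top.mpr hφsurj, finrank_top] at h2
  rw [Module.finrank_self] at h2
  have hle : LinearMap.range (1 - Θ).mulVecLin ≤ LinearMap.ker φ := by
    rintro y ⟨z, rfl⟩
    rw [LinearMap.mem_ker]
    show v ⬝ᵥ ((1 - Θ).mulVecLin z) = 0
    rw [Matrix.mulVecLin_apply]; exact hvdot z
  have hreq : LinearMap.range (1 - Θ).mulVecLin = LinearMap.ker φ :=
    Submodule.eq_of_le_of_finrank_eq hle (by omega)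
  -- solve consistency at x pstar
  have hy0 : ((-c) • Tcirc + Vcirc) ∈ LinearMap.ker φ := by
    rw [LinearMap.mem_ker]
    show v ⬝ᵥ ((-c) • Tcirc + Vcirc) = 0
    rw [dotProduct_add, dotProduct_smul, smul_eq_mul, hc]
    field_simp
    ring
  rw [← hreq] at hy0
  obtain ⟨Δ0, hΔ0⟩ := hy0
  rw [Matrix.mulVecLin_apply] at hΔ0
  -- adjust along κ for market clearing
  set t0 : ℝ := ((u - d) * L - w ⬝ᵥ Δ0) / (w ⬝ᵥ κ) with ht0
  set Δs : Fin m → ℝ := Δ0 + t0 • κ with hΔs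
  have hΔscons : (1 - Θ) *ᵥ Δs = x pstar • Tcirc + Vcirc := by
    rw [hΔs, Matrix.mulVec_add, Matrix.mulVec_smul, hκA, smul_zero, add_zero, hΔ0, hxps]
  have hΔsmc : w ⬝ᵥ Δs = (u - d) * L := by
    rw [hΔs, dotProduct_add, dotProduct_smul, smul_eq_mul, ht0]
    field_simp
    ring
  constructor
  · refine ⟨(pstar, Δs), ⟨⟨hp0, hp1⟩, hΔscons, hΔsmc⟩, ?_⟩
    rintro ⟨p, Δ⟩ ⟨⟨h0, h1p⟩, hcons, hmc⟩
    have hpe : p = pstar := puniq p h0 h1p (hforce p Δ hcons)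
    subst hpe
    have hdiff : (1 - Θ) *ᵥ (Δ - Δs) = 0 := by
      rw [Matrix.mulVec_sub, hcons, hΔscons, sub_self]
    obtain ⟨s, hs⟩ := hker_span _ hdiff
    have hΔeq : Δ = Δs := by
      have hwd : w ⬝ᵥ (Δ - Δs) = 0 := by
        rw [dotProduct_sub, hmc, hΔsmc, sub_self]
      rw [hs, dotProduct_smul, smul_eq_mul] at hwd
      have hs0 : s = 0 := by
        rcases mul_eq_zero.mp hwd with h | h
        · exact h
        · exact absurd h hwκ
      have : Δ - Δs = 0 := by rw [hs, hs0, zero_smul]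
      exact sub_eq_zero.mp this
    exact Prod.ext rfl hΔeq
  · rintro ⟨p, Δ⟩ ⟨h0, h1p⟩ hcons hmc
    exact puniq p h0 h1p (hforce p Δ hcons)
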